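/- Let d ≥ 2 and define υ(x) = min(1, |x'|^{-d}, |x_d - |x'|^2|^{-d}) and υ_*(x) = min(1, |x'|^{-d}, |x_d + |x'|^2|^{-d}) on ℝ^d. Then there exists C_d < ∞ such that T(υ_*)(x) ≤ C_d · υ(x)^{1/d} for all x ∈ ℝ^d, where Tf(x) = ∫_{ℝ^{d-1}} f(x'-t, x_d - |t|^2) dt. -/

import Mathlib

open MeasureTheory

/-- Points of ℝ^d written as `(x', x_d) ∈ ℝ^{d-1} × ℝ`. -/
abbrev Pt (d : ℕ) := EuclideanSpace ℝ (Fin (d - 1)) × ℝ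

/-- The convolution operator `Tf(x) = ∫_{ℝ^{d-1}} f(x'-t, x_d - |t|²) dt`
acting on nonnegative measurable functions. -/
noncomputable def Tlin (d : ℕ) (f : Pt d → ENNReal) (x : Pt d) : ENNReal :=
  ∫⁻ t : EuclideanSpace ℝ (Fin (d - 1)), f (x.1 - t, x.2 - ‖t‖ ^ 2)

/-- `υ(x) = min(1, |x'|^{-d}, |x_d - |x'|²|^{-d}) = (max(1, |x'|^d, |x_d - |x'|²|^d))⁻¹`. -/
noncomputable def ups (d : ℕ) (x : Pt d) : ENNReal :=
  ENNReal.ofReal ((max 1 (max (‖x.1‖ ^ d) (|x.2 - ‖x.1‖ ^ 2| ^ d)))⁻¹)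

/-- `υ_*(x) = min(1, |x'|^{-d}, |x_d + |x'|²|^{-d}) = (max(1, |x'|^d, |x_d + |x'|²|^d))⁻¹`. -/
noncomputable def upsStar (d : ℕ) (x : Pt d) : ENNReal :=
  ENNReal.ofReal ((max 1 (max (‖x.1‖ ^ d) (|x.2 + ‖x.1‖ ^ 2| ^ d)))⁻¹)

open scoped ENNReal RealInnerProductSpace

namespace ParabolaAux

/-! ### Elementary real lemmas -/

lemma pow_max_comm (d : ℕ) {a b : ℝ} (ha : 0 ≤ a) (hb : 0 ≤ b) :
    (max a b) ^ d = max (a ^ d) (b ^ d) := by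
  rcases le_total a b with h | h
  · rw [max_eq_right h, max_eq_right (pow_le_pow_left₀ ha h d)]
  · rw [max_eq_left h, max_eq_left (pow_le_pow_left₀ hb h d)]

lemma ofReal_inv_mono {x y : ℝ} (hx : 0 < x) (hxy : x ≤ y) :
    ENNReal.ofReal (y⁻¹) ≤ ENNReal.ofReal (x⁻¹) :=
  ENNReal.ofReal_le_ofReal (inv_anti₀ hx hxy)

lemma exists_dyadic {P x : ℝ} (hP : 0 < P) (hx : P < x) :
    ∃ j : ℕ, 2 ^ j * P < x ∧ x ≤ 2 ^ (j + 1) * P := by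
  have h2 : (1 : ℝ) < 2 := one_lt_two
  have hex : ∃ k : ℕ, x ≤ 2 ^ (k + 1) * P := by
    obtain ⟨k, hk⟩ := pow_unbounded_of_one_lt (x / P) h2
    refine ⟨k, ?_⟩
    have : x / P < 2 ^ k := hk
    have hle : x < 2 ^ k * P := by
      have := (div_lt_iff₀ hP).1 this
      linarith
    have : (2 : ℝ) ^ k * P ≤ 2 ^ (k + 1) * P := by
      have : (2 : ℝ) ^ k ≤ 2 ^ (k + 1) := by
        apply pow_le_pow_right₀ (by norm_num)
        omega
      nlinarith
    linarith
  classical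
  let j := Nat.find hex
  have hj2 : x ≤ 2 ^ (j + 1) * P := Nat.find_spec hex
  refine ⟨j, ?_, hj2⟩
  rcases Nat.eq_zero_or_pos j with hj0 | hjpos
  · rw [hj0]; simpa using hx
  · have hnot : ¬ x ≤ 2 ^ ((j - 1) + 1) * P := Nat.find_min hex (by omega)
    push_neg at hnot
    have : j - 1 + 1 = j := by omega
    rwa [this] at hnot

/-! ### The basic tail integral estimate in `ℝ^m` (sup norm, dyadic decomposition) -/

lemma lint_tail (m d : ℕ) (hmd : m < d) :
    ∃ C : ℝ≥0∞, C ≠ ⊤ ∧ ∀ P : ℝ, 0 < P →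
      (∫⁻ w : Fin m → ℝ, ENNReal.ofReal ((max (P ^ d) (‖w‖ ^ d))⁻¹)) ≤
        C * ENNReal.ofReal ((P ^ (d - m))⁻¹) := by
  refine ⟨(2 : ℝ≥0∞) ^ m + (4 : ℝ≥0∞) ^ m * 2,
    ENNReal.add_ne_top.2 ⟨ENNReal.pow_ne_top (by norm_num),
      ENNReal.mul_ne_top (ENNReal.pow_ne_top (by norm_num)) (by norm_num)⟩, fun P hP => ?_⟩
  have hP0 : P ≠ 0 := hP.ne'
  have hPd : 0 < P ^ d := pow_pos hP d
  set f : (Fin m → ℝ) → ℝ≥0∞ := fun w => ENNReal.ofReal ((max (P ^ d) (‖w‖ ^ d))⁻¹) with hf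
  set B : Set (Fin m → ℝ) := Metric.closedBall 0 P with hB
  have hBmeas : MeasurableSet B := measurableSet_closedBall
  have hsplit : (∫⁻ w, f w) = (∫⁻ w in B, f w) + ∫⁻ w in Bᶜ, f w :=
    (lintegral_add_compl f hBmeas).symm
  -- piece 1 : the ball
  have hvol : volume B = ENNReal.ofReal ((2 * P) ^ m) := by
    rw [hB, Real.volume_pi_closedBall 0 hP.le, Fintype.card_fin]
  have h1 : (∫⁻ w in B, f w) ≤ (2 : ℝ≥0∞) ^ m * ENNReal.ofReal ((P ^ (d - m))⁻¹) := by
    have step1 : (∫⁻ w in B, f w) ≤ ENNReal.ofReal ((P ^ d)⁻¹) * ENNReal.ofReal ((2 * P) ^ m) := by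
      calc (∫⁻ w in B, f w) ≤ ∫⁻ _ in B, ENNReal.ofReal ((P ^ d)⁻¹) := by
            apply setLIntegral_mono measurable_const
            intro w _
            exact ENNReal.ofReal_le_ofReal (inv_anti₀ hPd (le_max_left _ _))
        _ = ENNReal.ofReal ((P ^ d)⁻¹) * volume B := setLIntegral_const _ _
        _ = _ := by rw [hvol]
    refine step1.trans (le_of_eq ?_)
    rw [← ENNReal.ofReal_mul (by positivity),
      show ((2 : ℝ≥0∞)) ^ m = ENNReal.ofReal ((2 : ℝ) ^ m) by
        rw [ENNReal.ofReal_pow (by norm_num)]; norm_num,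
      ← ENNReal.ofReal_mul (by positivity)]
    congr 1
    have hPdsplit : P ^ d = P ^ (d - m) * P ^ m := by
      rw [← pow_add]; congr 1; omega
    rw [mul_pow, hPdsplit]
    field_simp
  -- piece 2 : the dyadic shells
  set S : ℕ → Set (Fin m → ℝ) := fun j =>
    Metric.closedBall 0 (2 ^ (j + 1) * P) \ Metric.closedBall 0 (2 ^ j * P) with hS
  have hsub : Bᶜ ⊆ ⋃ j, S j := by
    intro w hw
    have hnorm : P < ‖w‖ := by
      simp only [hB, Set.mem_compl_iff, Metric.mem_closedBall, dist_zero_right, not_le] at hw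
      exact hw
    obtain ⟨j, hj1, hj2⟩ := exists_dyadic hP hnorm
    refine Set.mem_iUnion.2 ⟨j, ?_, ?_⟩
    · simpa [Metric.mem_closedBall, dist_zero_right] using hj2
    · simpa [Metric.mem_closedBall, dist_zero_right, not_le] using hj1
  have hterm : ∀ j : ℕ, (∫⁻ w in S j, f w) ≤
      ENNReal.ofReal ((4 : ℝ) ^ m * (P ^ (d - m))⁻¹) * (ENNReal.ofReal 2⁻¹) ^ j := by
    intro j
    have hPj : (0 : ℝ) < 2 ^ j * P := by positivity
    have hbound : ∀ w ∈ S j, f w ≤ ENNReal.ofReal ((((2 : ℝ) ^ j * P) ^ d)⁻¹) := by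
      intro w hw
      have hw2 : (2 : ℝ) ^ j * P < ‖w‖ := by
        have := hw.2
        simpa [Metric.mem_closedBall, dist_zero_right, not_le] using this
      apply ENNReal.ofReal_le_ofReal
      apply inv_anti₀ (by positivity)
      exact le_max_of_le_right (pow_le_pow_left₀ hPj.le hw2.le d)
    have hvolS : volume (S j) ≤ ENNReal.ofReal ((2 * (2 ^ (j + 1) * P)) ^ m) := by
      refine (measure_mono Set.diff_subset).trans ?_
      rw [Real.volume_pi_closedBall 0 (by positivity), Fintype.card_fin]
    have hreal : (((2 : ℝ) ^ j * P) ^ d)⁻¹ * (2 * (2 ^ (j + 1) * P)) ^ m ≤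
        4 ^ m * (P ^ (d - m))⁻¹ * (2⁻¹) ^ j := by
      have e1 : ((2 : ℝ) ^ j * P) ^ d = 2 ^ (j * d) * P ^ d := by
        rw [mul_pow, ← pow_mul]
      have e2 : ((2 : ℝ) * (2 ^ (j + 1) * P)) ^ m = 2 ^ ((j + 2) * m) * P ^ m := by
        rw [show (2 : ℝ) * (2 ^ (j + 1) * P) = 2 ^ (j + 2) * P by ring, mul_pow, ← pow_mul]
      rw [e1, e2, inv_pow]
      have lhs_eq : ((2 : ℝ) ^ (j * d) * P ^ d)⁻¹ * (2 ^ ((j + 2) * m) * P ^ m) =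
          (2 ^ ((j + 2) * m) * P ^ m) / (2 ^ (j * d) * P ^ d) := by ring
      have rhs_eq : (4 : ℝ) ^ m * (P ^ (d - m))⁻¹ * ((2 : ℝ) ^ j)⁻¹ =
          ((2 : ℝ) ^ (2 * m)) / (P ^ (d - m) * 2 ^ j) := by
        rw [show (4 : ℝ) = 2 ^ 2 by norm_num, ← pow_mul]
        ring
      rw [lhs_eq, rhs_eq, div_le_div_iff₀ (by positivity) (by positivity)]
      have hexp : (j + 2) * m + j ≤ 2 * m + j * d := by
        have h1 : j * (m + 1) ≤ j * d := Nat.mul_le_mul_left j hmd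
        have h2 : (j + 2) * m + j = 2 * m + j * (m + 1) := by ring
        omega
      calc (2 : ℝ) ^ ((j + 2) * m) * P ^ m * (P ^ (d - m) * 2 ^ j)
          = 2 ^ ((j + 2) * m + j) * P ^ (m + (d - m)) := by rw [pow_add, pow_add]; ring
        _ ≤ 2 ^ (2 * m + j * d) * P ^ (m + (d - m)) := by
            apply mul_le_mul_of_nonneg_right _ (by positivity)
            exact pow_le_pow_right₀ one_le_two hexp
        _ = 2 ^ (2 * m) * (2 ^ (j * d) * P ^ d) := by
            rw [pow_add, show m + (d - m) = d by omega]; ring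
    calc (∫⁻ w in S j, f w) ≤ ∫⁻ _ in S j, ENNReal.ofReal ((((2 : ℝ) ^ j * P) ^ d)⁻¹) :=
          setLIntegral_mono measurable_const hbound
      _ = ENNReal.ofReal ((((2 : ℝ) ^ j * P) ^ d)⁻¹) * volume (S j) := setLIntegral_const _ _
      _ ≤ ENNReal.ofReal ((((2 : ℝ) ^ j * P) ^ d)⁻¹) *
            ENNReal.ofReal ((2 * (2 ^ (j + 1) * P)) ^ m) := mul_le_mul_right hvolS _
      _ = ENNReal.ofReal ((((2 : ℝ) ^ j * P) ^ d)⁻¹ * (2 * (2 ^ (j + 1) * P)) ^ m) := by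
          rw [← ENNReal.ofReal_mul (by positivity)]
      _ ≤ ENNReal.ofReal (4 ^ m * (P ^ (d - m))⁻¹ * (2⁻¹) ^ j) := ENNReal.ofReal_le_ofReal hreal
      _ = ENNReal.ofReal ((4 : ℝ) ^ m * (P ^ (d - m))⁻¹) * (ENNReal.ofReal 2⁻¹) ^ j := by
          rw [ENNReal.ofReal_mul (by positivity), ENNReal.ofReal_pow (by norm_num)]
  have h2 : (∫⁻ w in Bᶜ, f w) ≤ (4 : ℝ≥0∞) ^ m * 2 * ENNReal.ofReal ((P ^ (d - m))⁻¹) := by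
    have hq : (ENNReal.ofReal (2⁻¹ : ℝ)) = 2⁻¹ := by
      rw [ENNReal.ofReal_inv_of_pos (by norm_num)]; norm_num
    calc (∫⁻ w in Bᶜ, f w) ≤ ∫⁻ w in ⋃ j, S j, f w := lintegral_mono_set hsub
      _ ≤ ∑' j, ∫⁻ w in S j, f w := lintegral_iUnion_le _ _
      _ ≤ ∑' j, ENNReal.ofReal ((4 : ℝ) ^ m * (P ^ (d - m))⁻¹) * (ENNReal.ofReal 2⁻¹) ^ j :=
          ENNReal.tsum_le_tsum hterm
      _ = ENNReal.ofReal ((4 : ℝ) ^ m * (P ^ (d - m))⁻¹) * ∑' j, (ENNReal.ofReal 2⁻¹) ^ j :=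
          ENNReal.tsum_mul_left
      _ ≤ ENNReal.ofReal ((4 : ℝ) ^ m * (P ^ (d - m))⁻¹) * 2 := by
          apply mul_le_mul_right
          rw [hq, ENNReal.tsum_geometric, ENNReal.one_sub_inv_two, inv_inv]
      _ = (4 : ℝ≥0∞) ^ m * 2 * ENNReal.ofReal ((P ^ (d - m))⁻¹) := by
          rw [ENNReal.ofReal_mul (by positivity),
            show ((4 : ℝ≥0∞)) ^ m = ENNReal.ofReal ((4 : ℝ) ^ m) by
              rw [ENNReal.ofReal_pow (by norm_num)]; norm_num]
          ring
  calc (∫⁻ w, f w) = (∫⁻ w in B, f w) + ∫⁻ w in Bᶜ, f w := hsplit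
    _ ≤ (2 : ℝ≥0∞) ^ m * ENNReal.ofReal ((P ^ (d - m))⁻¹) +
        (4 : ℝ≥0∞) ^ m * 2 * ENNReal.ofReal ((P ^ (d - m))⁻¹) := add_le_add h1 h2
    _ = ((2 : ℝ≥0∞) ^ m + (4 : ℝ≥0∞) ^ m * 2) * ENNReal.ofReal ((P ^ (d - m))⁻¹) := by ring

/-! ### 1-dimensional consequences -/

lemma M1 : ∃ C : ℝ≥0∞, C ≠ ⊤ ∧ ∀ Q : ℝ, 0 < Q →
    (∫⁻ σ : ℝ, ENNReal.ofReal ((max (Q ^ 2) (σ ^ 2))⁻¹)) ≤ C * ENNReal.ofReal (Q⁻¹) := by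
  obtain ⟨C, hC, h⟩ := lint_tail 1 2 (by norm_num)
  refine ⟨C, hC, fun Q hQ => ?_⟩
  have hmeas : Measurable fun σ : ℝ => ENNReal.ofReal ((max (Q ^ 2) (σ ^ 2))⁻¹) :=
    ((measurable_const.max (measurable_id.pow_const 2)).inv).ennreal_ofReal
  have hmp := volume_preserving_funUnique (Fin 1) ℝ
  rw [← hmp.lintegral_comp hmeas]
  have hnorm : ∀ w : Fin 1 → ℝ,
      (MeasurableEquiv.funUnique (Fin 1) ℝ w) ^ 2 = ‖w‖ ^ 2 := by
    intro w
    have h1 : ‖w‖ = |w default| := by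
      apply le_antisymm
      · refine (pi_norm_le_iff_of_nonneg (abs_nonneg _)).2 fun i => ?_
        rw [Subsingleton.elim i default, Real.norm_eq_abs]
      · exact norm_le_pi_norm w default
    rw [h1, sq_abs]
    rfl
  have heq : (∫⁻ w : Fin 1 → ℝ,
      ENNReal.ofReal ((max (Q ^ 2) ((MeasurableEquiv.funUnique (Fin 1) ℝ w) ^ 2))⁻¹)) =
      ∫⁻ w : Fin 1 → ℝ, ENNReal.ofReal ((max (Q ^ 2) (‖w‖ ^ 2))⁻¹) :=
    lintegral_congr fun w => by rw [hnorm w]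
  refine heq.trans_le ?_
  have := h Q hQ
  simpa using this

lemma lintegral_affine {g : ℝ → ℝ≥0∞} (hg : Measurable g) {a : ℝ} (ha : a ≠ 0) (c : ℝ) :
    (∫⁻ σ : ℝ, g (c + a * σ)) = ENNReal.ofReal |a⁻¹| * ∫⁻ u : ℝ, g u := by
  have h1 : Measurable fun u : ℝ => g (c + u) := hg.comp (measurable_const.add measurable_id)
  calc (∫⁻ σ : ℝ, g (c + a * σ))
      = ∫⁻ u, g (c + u) ∂(Measure.map (fun x : ℝ => a * x) volume) := by
        rw [lintegral_map h1 (measurable_const_mul a)]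
    _ = ENNReal.ofReal |a⁻¹| * ∫⁻ u, g (c + u) := by
        rw [Real.map_volume_mul_left ha, lintegral_smul_measure]; rfl
    _ = ENNReal.ofReal |a⁻¹| * ∫⁻ u, g u := by
        rw [lintegral_add_left_eq_self (fun u => g u) c]

lemma L2 : ∃ C : ℝ≥0∞, C ≠ ⊤ ∧ ∀ a c : ℝ, 0 < a →
    (∫⁻ σ : ℝ, ENNReal.ofReal (((max 1 (max |σ| |c + a * σ|)) ^ 2)⁻¹)) ≤
      C * ENNReal.ofReal ((max 1 (max a |c|))⁻¹) := by
  obtain ⟨C₁, hC₁, hM⟩ := M1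
  refine ⟨C₁ * ENNReal.ofReal 8, ENNReal.mul_ne_top hC₁ ENNReal.ofReal_ne_top, fun a c ha => ?_⟩
  set M₀ : ℝ := max 1 (max a |c|) with hM₀def
  have hM₀1 : (1 : ℝ) ≤ M₀ := le_max_left _ _
  have hM₀pos : (0 : ℝ) < M₀ := lt_of_lt_of_le one_pos hM₀1
  set F : ℝ → ℝ≥0∞ := fun σ => ENNReal.ofReal (((max 1 (max |σ| |c + a * σ|)) ^ 2)⁻¹) with hF
  have meas2 : ∀ Q : ℝ, Measurable fun u : ℝ => ENNReal.ofReal ((max (Q ^ 2) (u ^ 2))⁻¹) :=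
    fun Q => ((measurable_const.max (measurable_id.pow_const 2)).inv).ennreal_ofReal
  have measaff : Measurable fun σ : ℝ => c + a * σ :=
    measurable_const.add (measurable_id.const_mul a)
  -- pointwise bound template
  have hpt : ∀ (Q : ℝ) (σ : ℝ), 0 < Q → Q ≤ max 1 (max |σ| |c + a * σ|) →
      F σ ≤ ENNReal.ofReal ((max (Q ^ 2) (σ ^ 2))⁻¹) := by
    intro Q σ hQpos σQle
    have hQ0 : (0 : ℝ) ≤ Q := hQpos.le
    have hQle := σQle
    apply ENNReal.ofReal_le_ofReal
    apply inv_anti₀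
    · exact lt_of_lt_of_le (pow_pos hQpos 2) (le_max_left _ _)
    · have h1 : max (Q ^ 2) (σ ^ 2) = (max Q |σ|) ^ 2 := by
        rw [pow_max_comm 2 hQ0 (abs_nonneg σ), sq_abs]
      rw [h1]
      apply pow_le_pow_left₀ (le_max_of_le_left hQ0)
      exact max_le hQle (le_max_of_le_right (le_max_left _ _))
  -- Bound 1 : by a constant
  have hB1 : (∫⁻ σ : ℝ, F σ) ≤ C₁ * ENNReal.ofReal ((1 : ℝ)⁻¹) := by
    refine le_trans (lintegral_mono fun σ => hpt 1 σ one_pos (le_max_left _ _)) ?_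
    exact hM 1 one_pos
  -- Bound 2 : by C₁ / a
  have hB2 : (∫⁻ σ : ℝ, F σ) ≤ C₁ * ENNReal.ofReal a⁻¹ := by
    have hpt2 : ∀ σ : ℝ, F σ ≤
        (fun u : ℝ => ENNReal.ofReal ((max ((1 : ℝ) ^ 2) (u ^ 2))⁻¹)) (c + a * σ) := by
      intro σ
      apply ENNReal.ofReal_le_ofReal
      apply inv_anti₀
      · exact lt_of_lt_of_le (by norm_num) (le_max_left _ _)
      · have h1 : max ((1 : ℝ) ^ 2) ((c + a * σ) ^ 2) = (max 1 |c + a * σ|) ^ 2 := by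
          rw [pow_max_comm 2 zero_le_one (abs_nonneg _), sq_abs]
        rw [h1]
        apply pow_le_pow_left₀ (le_max_of_le_left zero_le_one)
        exact max_le (le_max_left _ _) (le_max_of_le_right (le_max_right _ _))
    calc (∫⁻ σ : ℝ, F σ)
        ≤ ∫⁻ σ : ℝ, (fun u : ℝ => ENNReal.ofReal ((max ((1 : ℝ) ^ 2) (u ^ 2))⁻¹)) (c + a * σ) :=
          lintegral_mono hpt2
      _ = ENNReal.ofReal |a⁻¹| * ∫⁻ u : ℝ, ENNReal.ofReal ((max ((1 : ℝ) ^ 2) (u ^ 2))⁻¹) :=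
          lintegral_affine (meas2 1) ha.ne' c
      _ ≤ ENNReal.ofReal a⁻¹ * (C₁ * ENNReal.ofReal ((1 : ℝ)⁻¹)) := by
          rw [abs_of_pos (inv_pos.2 ha)]
          exact mul_le_mul_right (hM 1 one_pos) _
      _ = C₁ * ENNReal.ofReal a⁻¹ := by rw [inv_one, ENNReal.ofReal_one, mul_one]; ring
  -- Bound 3 : by C₁ * 4 / |c| when 2 ≤ |c|
  have hB3 : 2 ≤ |c| → (∫⁻ σ : ℝ, F σ) ≤ C₁ * ENNReal.ofReal (4 * |c|⁻¹) := by
    intro h2c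
    have hcpos : (0 : ℝ) < |c| := by linarith
    set Q₁ : ℝ := max 1 (|c| / 2) with hQ₁def
    have hQ₁pos : (0 : ℝ) < Q₁ := lt_of_lt_of_le one_pos (le_max_left _ _)
    set S : ℝ := |c| / (2 * a) with hSdef
    have hSpos : (0 : ℝ) < S := by positivity
    set Q₂ : ℝ := max S 1 with hQ₂def
    have hQ₂pos : (0 : ℝ) < Q₂ := lt_of_lt_of_le hSpos (le_max_left _ _)
    set E : Set ℝ := {σ : ℝ | |c| / 2 ≤ |c + a * σ|} with hEdef
    have hEmeas : MeasurableSet E := measurableSet_le measurable_const measaff.abs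
    have hpieceE : (∫⁻ σ in E, F σ) ≤ C₁ * ENNReal.ofReal (2 * |c|⁻¹) := by
      have hb : ∀ σ ∈ E, F σ ≤ ENNReal.ofReal ((max (Q₁ ^ 2) (σ ^ 2))⁻¹) := by
        intro σ hσ
        refine hpt Q₁ σ hQ₁pos (max_le (le_max_left _ _) ?_)
        exact le_max_of_le_right (le_max_of_le_right hσ)
      calc (∫⁻ σ in E, F σ) ≤ ∫⁻ σ in E, ENNReal.ofReal ((max (Q₁ ^ 2) (σ ^ 2))⁻¹) :=
            setLIntegral_mono (meas2 Q₁) hb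
        _ ≤ ∫⁻ σ : ℝ, ENNReal.ofReal ((max (Q₁ ^ 2) (σ ^ 2))⁻¹) := setLIntegral_le_lintegral _ _
        _ ≤ C₁ * ENNReal.ofReal Q₁⁻¹ := hM Q₁ hQ₁pos
        _ ≤ C₁ * ENNReal.ofReal (2 * |c|⁻¹) := by
            apply mul_le_mul_right
            apply ENNReal.ofReal_le_ofReal
            have h1 : (|c| / 2)⁻¹ = 2 * |c|⁻¹ := by
              rw [inv_div]; ring
            rw [← h1]
            exact inv_anti₀ (by positivity) (le_max_right _ _)
    have hpieceEc : (∫⁻ σ in Eᶜ, F σ) ≤ C₁ * ENNReal.ofReal (2 * |c|⁻¹) := by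
      have hb : ∀ σ ∈ Eᶜ, F σ ≤
          (fun u : ℝ => ENNReal.ofReal ((max (Q₂ ^ 2) (u ^ 2))⁻¹)) (c + a * σ) := by
        intro σ hσ
        have hlt : |c + a * σ| < |c| / 2 := by
          simpa [hEdef, not_le] using hσ
        have hS_le : S ≤ |σ| := by
          have habs : |a * σ| = a * |σ| := by rw [abs_mul, abs_of_pos ha]
          have h3 : |c| ≤ |c + a * σ| + a * |σ| := by
            calc |c| = |(c + a * σ) + (-(a * σ))| := by ring_nf
              _ ≤ |c + a * σ| + |(-(a * σ))| := abs_add_le _ _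
              _ = |c + a * σ| + a * |σ| := by rw [abs_neg, habs]
          have h4 : |c| / 2 ≤ a * |σ| := by linarith
          rw [hSdef]
          rw [div_le_iff₀ (by positivity)]
          calc |c| ≤ 2 * (a * |σ|) := by linarith
            _ = |σ| * (2 * a) := by ring
        apply ENNReal.ofReal_le_ofReal
        apply inv_anti₀
        · exact lt_of_lt_of_le (pow_pos hQ₂pos 2) (le_max_left _ _)
        · have h1 : max (Q₂ ^ 2) ((c + a * σ) ^ 2) = (max Q₂ |c + a * σ|) ^ 2 := by
            rw [pow_max_comm 2 (le_of_lt hQ₂pos) (abs_nonneg _), sq_abs]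
          rw [h1]
          apply pow_le_pow_left₀ (le_max_of_le_left (le_of_lt hQ₂pos))
          apply max_le
          · exact max_le (le_max_of_le_right (le_max_of_le_left hS_le)) (le_max_left _ _)
          · exact le_max_of_le_right (le_max_right _ _)
      calc (∫⁻ σ in Eᶜ, F σ)
          ≤ ∫⁻ σ in Eᶜ, (fun u : ℝ => ENNReal.ofReal ((max (Q₂ ^ 2) (u ^ 2))⁻¹)) (c + a * σ) :=
            setLIntegral_mono ((meas2 Q₂).comp measaff) hb
        _ ≤ ∫⁻ σ : ℝ, (fun u : ℝ => ENNReal.ofReal ((max (Q₂ ^ 2) (u ^ 2))⁻¹)) (c + a * σ) :=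
            setLIntegral_le_lintegral _ _
        _ = ENNReal.ofReal |a⁻¹| * ∫⁻ u : ℝ, ENNReal.ofReal ((max (Q₂ ^ 2) (u ^ 2))⁻¹) :=
            lintegral_affine (meas2 Q₂) ha.ne' c
        _ ≤ ENNReal.ofReal a⁻¹ * (C₁ * ENNReal.ofReal Q₂⁻¹) := by
            rw [abs_of_pos (inv_pos.2 ha)]
            exact mul_le_mul_right (hM Q₂ hQ₂pos) _
        _ ≤ ENNReal.ofReal a⁻¹ * (C₁ * ENNReal.ofReal S⁻¹) := by
            apply mul_le_mul_right
            apply mul_le_mul_right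
            exact ENNReal.ofReal_le_ofReal (inv_anti₀ hSpos (le_max_left _ _))
        _ = C₁ * ENNReal.ofReal (2 * |c|⁻¹) := by
            rw [show ENNReal.ofReal a⁻¹ * (C₁ * ENNReal.ofReal S⁻¹) =
              C₁ * (ENNReal.ofReal a⁻¹ * ENNReal.ofReal S⁻¹) by ring,
              ← ENNReal.ofReal_mul (by positivity)]
            congr 2
            rw [hSdef]
            field_simp
    calc (∫⁻ σ : ℝ, F σ) = (∫⁻ σ in E, F σ) + ∫⁻ σ in Eᶜ, F σ :=
          (lintegral_add_compl F hEmeas).symm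
      _ ≤ C₁ * ENNReal.ofReal (2 * |c|⁻¹) + C₁ * ENNReal.ofReal (2 * |c|⁻¹) :=
          add_le_add hpieceE hpieceEc
      _ = C₁ * ENNReal.ofReal (4 * |c|⁻¹) := by
          rw [← mul_add, ← ENNReal.ofReal_add (by positivity) (by positivity)]
          congr 2
          ring
  -- combine all the cases
  have goal8 : ∀ k : ℝ, 0 ≤ k → k ≤ 8 * M₀⁻¹ →
      C₁ * ENNReal.ofReal k ≤ C₁ * ENNReal.ofReal 8 * ENNReal.ofReal (M₀⁻¹) := by
    intro k hk0 hk
    rw [mul_assoc, ← ENNReal.ofReal_mul (by norm_num)]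
    exact mul_le_mul_right (ENNReal.ofReal_le_ofReal hk) _
  rcases le_total |c| 2 with hc2 | hc2
  · rcases le_total a 1 with ha1 | ha1
    · refine hB1.trans (goal8 _ (by norm_num) ?_)
      have hle : M₀ ≤ 2 := max_le (by norm_num) (max_le (by linarith) hc2)
      have := inv_anti₀ hM₀pos hle
      rw [inv_one]
      nlinarith [inv_pos.2 hM₀pos]
    · refine hB2.trans (goal8 _ (by positivity) ?_)
      have hle : M₀ ≤ 2 * a := max_le (by linarith) (max_le (by linarith) (by linarith))
      have h1 := inv_anti₀ hM₀pos hle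
      have h2 : (2 * a)⁻¹ = 2⁻¹ * a⁻¹ := by rw [mul_inv]
      nlinarith [inv_pos.2 ha, inv_pos.2 hM₀pos]
  · rcases le_total a |c| with hac | hac
    · refine (hB3 hc2).trans (goal8 _ (by positivity) ?_)
      have hle : M₀ ≤ 2 * |c| := max_le (by linarith) (max_le (by linarith) (by linarith))
      have h1 := inv_anti₀ hM₀pos hle
      have h2 : (2 * |c|)⁻¹ = 2⁻¹ * |c|⁻¹ := by rw [mul_inv]
      have hcpos : (0 : ℝ) < |c| := by linarith
      nlinarith [inv_pos.2 hcpos, inv_pos.2 hM₀pos]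
    · refine hB2.trans (goal8 _ (by positivity) ?_)
      have hle : M₀ ≤ 8 * a := max_le (by linarith) (max_le (by linarith) (by linarith))
      have h1 := inv_anti₀ hM₀pos hle
      have h2 : (8 * a)⁻¹ = 8⁻¹ * a⁻¹ := by rw [mul_inv]
      nlinarith [inv_pos.2 ha, inv_pos.2 hM₀pos]

/-! ### The core estimate -/

lemma coord_abs_le_norm {k : ℕ} (y : EuclideanSpace ℝ (Fin k)) (i : Fin k) : |y i| ≤ ‖y‖ := by
  rw [EuclideanSpace.norm_eq, ← Real.sqrt_sq_eq_abs]
  apply Real.sqrt_le_sqrt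
  have h1 : (y i) ^ 2 = ‖y i‖ ^ 2 := by rw [Real.norm_eq_abs, sq_abs]
  rw [h1]
  exact Finset.single_le_sum (f := fun j => ‖y j‖ ^ 2) (fun j _ => by positivity)
    (Finset.mem_univ i)

lemma core (n dd : ℕ) (hn : 1 ≤ n) (hd : n + 1 ≤ dd) :
    ∃ C : ℝ≥0∞, C ≠ ⊤ ∧ ∀ (v : EuclideanSpace ℝ (Fin n)) (c : ℝ),
      (∫⁻ s : EuclideanSpace ℝ (Fin n),
          ENNReal.ofReal ((max 1 (max (‖s‖ ^ dd) (|c + (⟪v, s⟫)| ^ dd)))⁻¹)) ≤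
        C * ENNReal.ofReal ((max 1 (max ‖v‖ |c|))⁻¹) := by
  obtain ⟨m, rfl⟩ : ∃ m, n = m + 1 := ⟨n - 1, by omega⟩
  have hd' : m + 2 ≤ dd := by omega
  obtain ⟨C₀, hC₀, hL0⟩ := lint_tail m dd (by omega)
  obtain ⟨C₀', hC₀', hL0'⟩ := lint_tail (m + 1) dd (by omega)
  obtain ⟨C₂, hC₂, hL2⟩ := L2
  refine ⟨C₀' + C₀ * C₂, ENNReal.add_ne_top.2 ⟨hC₀', ENNReal.mul_ne_top hC₀ hC₂⟩, fun v c => ?_⟩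
  have hFmeas : Measurable (fun s : EuclideanSpace ℝ (Fin (m + 1)) =>
      ENNReal.ofReal ((max 1 (max (‖s‖ ^ dd) (|c + (⟪v, s⟫)| ^ dd)))⁻¹)) := by
    apply Measurable.ennreal_ofReal
    apply Measurable.inv
    apply Measurable.max measurable_const
    apply Measurable.max
    · exact measurable_norm.pow_const dd
    · exact ((measurable_const.add
        ((continuous_const.inner continuous_id).measurable)).abs).pow_const dd
  by_cases hv : v = 0
  · -- the degenerate direction-free case
    subst hv
    simp only [inner_zero_left, add_zero]
    set P₀ : ℝ := max 1 |c| with hP₀def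
    have hP₀1 : (1 : ℝ) ≤ P₀ := le_max_left _ _
    have hP₀pos : (0 : ℝ) < P₀ := lt_of_lt_of_le one_pos hP₀1
    have hmp := (EuclideanSpace.volume_preserving_symm_measurableEquiv_toLp (Fin (m + 1))).symm
    have hFmeas0 : Measurable (fun s : EuclideanSpace ℝ (Fin (m + 1)) =>
        ENNReal.ofReal ((max 1 (max (‖s‖ ^ dd) (|c| ^ dd)))⁻¹)) := by
      apply Measurable.ennreal_ofReal
      exact ((measurable_const.max ((measurable_norm.pow_const dd).max
        measurable_const)).inv).comp measurable_id |>.comp measurable_id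
    rw [← hmp.lintegral_comp hFmeas0]
    have hpt0 : ∀ w : Fin (m + 1) → ℝ,
        ENNReal.ofReal ((max 1 (max
          (‖(MeasurableEquiv.toLp 2 (Fin (m + 1) → ℝ)).symm.symm w‖ ^ dd) (|c| ^ dd)))⁻¹) ≤
        ENNReal.ofReal ((max (P₀ ^ dd) (‖w‖ ^ dd))⁻¹) := by
      intro w
      set y : EuclideanSpace ℝ (Fin (m + 1)) :=
        (MeasurableEquiv.toLp 2 (Fin (m + 1) → ℝ)).symm.symm w with hy
      have hyw : ∀ i, y i = w i := fun i => rfl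
      have hcoord : ∀ i, |w i| ≤ ‖y‖ := fun i => by rw [← hyw i]; exact coord_abs_le_norm y i
      have hwnorm : ‖w‖ ≤ ‖y‖ := by
        refine (pi_norm_le_iff_of_nonneg (norm_nonneg y)).2 fun i => ?_
        rw [Real.norm_eq_abs]; exact hcoord i
      apply ENNReal.ofReal_le_ofReal
      apply inv_anti₀
      · exact lt_of_lt_of_le (pow_pos hP₀pos dd) (le_max_left _ _)
      · apply max_le
        · rw [hP₀def, pow_max_comm dd zero_le_one (abs_nonneg c), one_pow]
          exact max_le (le_max_left _ _) (le_max_of_le_right (le_max_right _ _))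
        · exact le_max_of_le_right (le_max_of_le_left
            (pow_le_pow_left₀ (norm_nonneg w) hwnorm dd))
    calc (∫⁻ w : Fin (m + 1) → ℝ, ENNReal.ofReal ((max 1 (max
          (‖(MeasurableEquiv.toLp 2 (Fin (m + 1) → ℝ)).symm.symm w‖ ^ dd) (|c| ^ dd)))⁻¹))
        ≤ ∫⁻ w : Fin (m + 1) → ℝ, ENNReal.ofReal ((max (P₀ ^ dd) (‖w‖ ^ dd))⁻¹) :=
          lintegral_mono hpt0
      _ ≤ C₀' * ENNReal.ofReal ((P₀ ^ (dd - (m + 1)))⁻¹) := hL0' P₀ hP₀pos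
      _ ≤ C₀' * ENNReal.ofReal (P₀⁻¹) := by
          apply mul_le_mul_right
          apply ENNReal.ofReal_le_ofReal
          apply inv_anti₀ hP₀pos
          calc P₀ = P₀ ^ 1 := (pow_one P₀).symm
            _ ≤ P₀ ^ (dd - (m + 1)) := pow_le_pow_right₀ hP₀1 (by omega)
      _ ≤ (C₀' + C₀ * C₂) * ENNReal.ofReal ((max 1 (max ‖(0 : EuclideanSpace ℝ (Fin (m + 1)))‖
            |c|))⁻¹) := by
          rw [norm_zero, max_eq_right (abs_nonneg c)]
          exact mul_le_mul_left le_self_add _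
  · -- the main case
    set a : ℝ := ‖v‖ with ha_def
    have ha : (0 : ℝ) < a := norm_pos_iff.2 hv
    set e : EuclideanSpace ℝ (Fin (m + 1)) := (‖v‖⁻¹ : ℝ) • v with he_def
    have he : ‖e‖ = 1 := norm_smul_inv_norm hv
    set e₀ : EuclideanSpace ℝ (Fin (m + 1)) := EuclideanSpace.single 0 (1 : ℝ) with he₀def
    have he₀ : ‖e₀‖ = 1 := by rw [he₀def, EuclideanSpace.norm_single, norm_one]
    set R := Submodule.reflection (ℝ ∙ (e - e₀))ᗮ with hRdef
    have hRe : R e = e₀ := Submodule.reflection_sub (by rw [he, he₀])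
    have hveq : v = a • e := by
      rw [he_def, smul_smul, ha_def, mul_inv_cancel₀ (norm_ne_zero_iff.2 hv), one_smul]
    -- the full measure-preserving change of variables
    have hmpR : MeasurePreserving (⇑R.symm) volume volume := R.symm.measurePreserving
    have hmp2 : MeasurePreserving (⇑(MeasurableEquiv.toLp 2 (Fin (m + 1) → ℝ)).symm.symm)
        volume volume := (EuclideanSpace.volume_preserving_symm_measurableEquiv_toLp (Fin (m + 1))).symm
    have hmp3 : MeasurePreserving
        (⇑(MeasurableEquiv.piFinSuccAbove (fun _ : Fin (m + 1) => ℝ) 0).symm) volume volume :=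
      (volume_preserving_piFinSuccAbove (fun _ : Fin (m + 1) => ℝ) 0).symm
    have hΦ : MeasurePreserving ((⇑R.symm) ∘
        ((⇑(MeasurableEquiv.toLp 2 (Fin (m + 1) → ℝ)).symm.symm) ∘
          (⇑(MeasurableEquiv.piFinSuccAbove (fun _ : Fin (m + 1) => ℝ) 0).symm)))
        volume volume := hmpR.comp (hmp2.comp hmp3)
    rw [← hΦ.lintegral_comp hFmeas]
    set G : ℝ × (Fin m → ℝ) → ℝ≥0∞ := fun p =>
      ENNReal.ofReal ((max ((max 1 (max |p.1| |c + a * p.1|)) ^ dd) (‖p.2‖ ^ dd))⁻¹) with hG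
    have hGmeas : Measurable G := by
      apply Measurable.ennreal_ofReal
      apply Measurable.inv
      apply Measurable.max
      · exact ((measurable_const.max ((measurable_fst.abs).max
          ((measurable_const.add (measurable_fst.const_mul a)).abs))).pow_const dd)
      · exact (measurable_snd.norm).pow_const dd
    have hpt : ∀ p : ℝ × (Fin m → ℝ),
        (fun s => ENNReal.ofReal ((max 1 (max (‖s‖ ^ dd) (|c + (⟪v, s⟫)| ^ dd)))⁻¹))
          (((⇑R.symm) ∘ ((⇑(MeasurableEquiv.toLp 2 (Fin (m + 1) → ℝ)).symm.symm) ∘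
            (⇑(MeasurableEquiv.piFinSuccAbove (fun _ : Fin (m + 1) => ℝ) 0).symm))) p) ≤
        G p := by
      intro p
      set u : Fin (m + 1) → ℝ :=
        (MeasurableEquiv.piFinSuccAbove (fun _ : Fin (m + 1) => ℝ) 0).symm p with hu
      set y : EuclideanSpace ℝ (Fin (m + 1)) :=
        (MeasurableEquiv.toLp 2 (Fin (m + 1) → ℝ)).symm.symm u with hy
      have hyu : ∀ i, y i = u i := fun i => rfl
      have hu0 : u 0 = p.1 := by
        rw [hu]
        simp [MeasurableEquiv.piFinSuccAbove]
      have huj : ∀ j : Fin m, u ((0 : Fin (m + 1)).succAbove j) = p.2 j := by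
        intro j
        rw [hu]
        simp [MeasurableEquiv.piFinSuccAbove]
      have hnorm_s : ‖R.symm y‖ = ‖y‖ := R.symm.norm_map y
      have hinner : (⟪v, R.symm y⟫) = a * p.1 := by
        have h1 : (⟪v, R.symm y⟫) = a * (⟪e, R.symm y⟫) := by
          rw [hveq, real_inner_smul_left]
        have h2 : (⟪e, R.symm y⟫) = (⟪R e, R (R.symm y)⟫) := (R.inner_map_map _ _).symm
        have h3 : (⟪e₀, y⟫) = y 0 := by
          rw [he₀def, EuclideanSpace.inner_single_left]
          simp
        rw [h1, h2, LinearIsometryEquiv.apply_symm_apply, hRe, h3, hyu 0, hu0]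
      have hy0 : |p.1| ≤ ‖y‖ := by
        rw [← hu0, ← hyu 0]; exact coord_abs_le_norm y 0
      have hy2 : ‖p.2‖ ≤ ‖y‖ := by
        refine (pi_norm_le_iff_of_nonneg (norm_nonneg y)).2 fun j => ?_
        rw [Real.norm_eq_abs, ← huj j, ← hyu _]
        exact coord_abs_le_norm y _
      show ENNReal.ofReal ((max 1 (max (‖R.symm y‖ ^ dd) (|c + (⟪v, R.symm y⟫)| ^ dd)))⁻¹) ≤ G p
      rw [hnorm_s, hinner]
      apply ENNReal.ofReal_le_ofReal
      apply inv_anti₀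
      · have h4 : (1 : ℝ) ≤ max 1 (max |p.1| |c + a * p.1|) := le_max_left _ _
        exact lt_of_lt_of_le (pow_pos (lt_of_lt_of_le one_pos h4) dd) (le_max_left _ _)
      · apply max_le
        · rw [pow_max_comm dd zero_le_one (le_max_iff.2 (Or.inl (abs_nonneg p.1))), one_pow,
            pow_max_comm dd (abs_nonneg p.1) (abs_nonneg _)]
          apply max_le (le_max_left _ _)
          apply max_le
          · exact le_max_of_le_right (le_max_of_le_left
              (pow_le_pow_left₀ (abs_nonneg p.1) hy0 dd))
          · exact le_max_of_le_right (le_max_right _ _)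
        · exact le_max_of_le_right (le_max_of_le_left
            (pow_le_pow_left₀ (norm_nonneg p.2) hy2 dd))
    calc (∫⁻ p : ℝ × (Fin m → ℝ),
          (fun s => ENNReal.ofReal ((max 1 (max (‖s‖ ^ dd) (|c + (⟪v, s⟫)| ^ dd)))⁻¹))
            (((⇑R.symm) ∘ ((⇑(MeasurableEquiv.toLp 2 (Fin (m + 1) → ℝ)).symm.symm) ∘
              (⇑(MeasurableEquiv.piFinSuccAbove (fun _ : Fin (m + 1) => ℝ) 0).symm))) p))
        ≤ ∫⁻ p : ℝ × (Fin m → ℝ), G p := lintegral_mono hpt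
      _ = ∫⁻ σ : ℝ, ∫⁻ w : Fin m → ℝ, G (σ, w) := by
          rw [MeasureTheory.Measure.volume_eq_prod, lintegral_prod _ hGmeas.aemeasurable]
      _ ≤ ∫⁻ σ : ℝ, C₀ *
            ENNReal.ofReal (((max 1 (max |σ| |c + a * σ|)) ^ 2)⁻¹) := by
          apply lintegral_mono
          intro σ
          set Pσ : ℝ := max 1 (max |σ| |c + a * σ|) with hPσ
          have hPσ1 : (1 : ℝ) ≤ Pσ := le_max_left _ _
          have hPσpos : (0 : ℝ) < Pσ := lt_of_lt_of_le one_pos hPσ1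
          refine (hL0 Pσ hPσpos).trans (mul_le_mul_right ?_ _)
          apply ENNReal.ofReal_le_ofReal
          apply inv_anti₀ (pow_pos hPσpos 2)
          exact pow_le_pow_right₀ hPσ1 (by omega)
      _ = C₀ * ∫⁻ σ : ℝ, ENNReal.ofReal (((max 1 (max |σ| |c + a * σ|)) ^ 2)⁻¹) :=
          lintegral_const_mul' _ _ hC₀
      _ ≤ C₀ * (C₂ * ENNReal.ofReal ((max 1 (max a |c|))⁻¹)) :=
          mul_le_mul_right (hL2 a c ha) _
      _ ≤ (C₀' + C₀ * C₂) * ENNReal.ofReal ((max 1 (max ‖v‖ |c|))⁻¹) := by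
          rw [← mul_assoc, ← ha_def]
          exact mul_le_mul_left le_add_self _

end ParabolaAux

/-- For `d ≥ 2` there is a finite constant `C_d` with `T(υ_*) ≤ C_d · υ^{1/d}` pointwise. -/
theorem Tlin_upsStar_le (d : ℕ) (hd : 2 ≤ d) :
    ∃ C : ENNReal, C < ⊤ ∧ ∀ x : Pt d,
      Tlin d (upsStar d) x ≤ C * (ups d x) ^ ((1 : ℝ) / d) := by
  obtain ⟨C, hC, hcore⟩ := ParabolaAux.core (d - 1) d (by omega) (by omega)
  refine ⟨C, lt_top_iff_ne_top.2 hC, fun x => ?_⟩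
  set c : ℝ := x.2 - ‖x.1‖ ^ 2 with hc
  set v : EuclideanSpace ℝ (Fin (d - 1)) := (-2 : ℝ) • x.1 with hv
  have key : Tlin d (upsStar d) x =
      ∫⁻ s : EuclideanSpace ℝ (Fin (d - 1)),
        ENNReal.ofReal ((max 1 (max (‖s‖ ^ d) (|c + (⟪v, s⟫)| ^ d)))⁻¹) := by
    show (∫⁻ t : EuclideanSpace ℝ (Fin (d - 1)),
        upsStar d (x.1 - t, x.2 - ‖t‖ ^ 2)) = _
    rw [← lintegral_add_right_eq_self
      (fun t : EuclideanSpace ℝ (Fin (d - 1)) => upsStar d (x.1 - t, x.2 - ‖t‖ ^ 2)) x.1]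
    apply lintegral_congr
    intro s
    show upsStar d (x.1 - (s + x.1), x.2 - ‖s + x.1‖ ^ 2) = _
    have h1 : x.1 - (s + x.1) = -s := by abel
    have h2 : x.2 - ‖s + x.1‖ ^ 2 + ‖s‖ ^ 2 = c + (⟪v, s⟫) := by
      have h3 : ‖s + x.1‖ ^ 2 = ‖s‖ ^ 2 + 2 * (⟪s, x.1⟫) + ‖x.1‖ ^ 2 := norm_add_sq_real s x.1
      have h4 : (⟪v, s⟫) = -2 * (⟪s, x.1⟫) := by
        rw [hv, real_inner_smul_left, real_inner_comm]
      rw [h3, h4, hc]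
      ring
    simp only [upsStar, h1]
    rw [norm_neg]
    congr 2
    rw [← h2]
  rw [key]
  refine (hcore v c).trans ?_
  set M : ℝ := max 1 (max ‖x.1‖ |c|) with hMdef
  have hM1 : (1 : ℝ) ≤ M := le_max_left _ _
  have hMpos : (0 : ℝ) < M := lt_of_lt_of_le one_pos hM1
  have hvnorm : ‖v‖ = 2 * ‖x.1‖ := by
    rw [hv, norm_smul]
    norm_num
  have hstep1 : ENNReal.ofReal ((max 1 (max ‖v‖ |c|))⁻¹) ≤ ENNReal.ofReal (M⁻¹) := by
    apply ParabolaAux.ofReal_inv_mono hMpos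
    apply max_le (le_max_left _ _)
    apply max_le
    · refine le_trans ?_ (le_max_of_le_right (le_max_left _ _))
      rw [hvnorm]
      have := norm_nonneg x.1
      linarith
    · exact le_max_of_le_right (le_max_right _ _)
  have hups : (ups d x) ^ ((1 : ℝ) / ((d : ℕ) : ℝ)) = ENNReal.ofReal (M⁻¹) := by
    have h3 : max 1 (max (‖x.1‖ ^ d) (|x.2 - ‖x.1‖ ^ 2| ^ d)) = M ^ d := by
      rw [hMdef, ParabolaAux.pow_max_comm d zero_le_one
        (le_max_iff.2 (Or.inl (norm_nonneg x.1))), one_pow,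
        ParabolaAux.pow_max_comm d (norm_nonneg x.1) (abs_nonneg _), ← hc]
    show (ENNReal.ofReal ((max 1 (max (‖x.1‖ ^ d)
        (|x.2 - ‖x.1‖ ^ 2| ^ d)))⁻¹)) ^ ((1 : ℝ) / ((d : ℕ) : ℝ)) = _
    rw [h3, ← inv_pow, ENNReal.ofReal_pow (inv_nonneg.2 hMpos.le), ← ENNReal.rpow_natCast _
      d, ← ENNReal.rpow_mul]
    rw [show ((d : ℕ) : ℝ) * ((1 : ℝ) / ((d : ℕ) : ℝ)) = 1 by
      field_simp]
    rw [ENNReal.rpow_one]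
  calc C * ENNReal.ofReal ((max 1 (max ‖v‖ |c|))⁻¹)
      ≤ C * ENNReal.ofReal (M⁻¹) := mul_le_mul_right hstep1 _
    _ = C * (ups d x) ^ ((1 : ℝ) / ((d : ℕ) : ℝ)) := by rw [hups]
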